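/- Fix $n\ge1$, $m\ge1$, and $a\in(-1,1)$. Define constants $C_0=1$ and $C_k = -\frac{2(m-k+1)(2(m-k)+n)}{2k(2k-1+a)}C_{k-1}$ for $k=1,\dots,m$. Then the $2m$-homogeneous polynomial $h_{2m}(x,y)=\sum_{k=0}^m C_k\, y^{2k}(x_1^2+\cdots+x_n^2)^{m-k}$ satisfies $L_a h_{2m}=\Delta_x h_{2m} + \partial_{yy}h_{2m} + \frac{a}{y}\partial_y h_{2m} = 0$ for $y\ne0$, is even in $y$, and equals $1$ on the set $\{|x|=1, y=0\}$. -/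

import Mathlib

open Finset

lemma sumPow_hasDerivAt (N : ℕ) (c : ℕ → ℝ) (e : ℕ → ℕ) (t : ℝ) :
    HasDerivAt (fun s : ℝ => ∑ k ∈ range N, c k * s ^ (e k))
      (∑ k ∈ range N, c k * ((e k : ℝ) * t ^ (e k - 1))) t := by
  apply HasDerivAt.fun_sum
  intro k _
  exact (hasDerivAt_pow (e k) t).const_mul (c k)


/-- The `2m`-homogeneous polynomial `h_{2m}(x,y) = ∑_{k=0}^m C_k y^{2k} |x|^{2(m-k)}`
with `C₀ = 1`, `C_k = -((2(m-k+1)(2(m-k)+n))/(2k(2k-1+a))) C_{k-1}`, is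
`Lₐ`-harmonic for `y ≠ 0` (i.e. `Δₓ h + ∂_{yy} h + (a/y) ∂_y h = 0`), even in `y`,
and equals `1` on `{|x| = 1, y = 0}`. -/
theorem stmt5 (n m : ℕ) (hn : 1 ≤ n) (hm : 1 ≤ m) (a : ℝ) (ha : -1 < a ∧ a < 1)
    (C : ℕ → ℝ) (hC0 : C 0 = 1)
    (hCk : ∀ k : ℕ, 1 ≤ k → k ≤ m →
      C k = -((2 * ((m : ℝ) - k + 1) * (2 * ((m : ℝ) - k) + n)) /
        (2 * (k : ℝ) * (2 * (k : ℝ) - 1 + a))) * C (k - 1))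
    (H : EuclideanSpace ℝ (Fin n) → ℝ → ℝ)
    (hH : ∀ (x : EuclideanSpace ℝ (Fin n)) (y : ℝ),
      H x y = ∑ k ∈ range (m + 1), C k * y ^ (2 * k) * (∑ i, (x i) ^ 2) ^ (m - k)) :
    (∀ (x : EuclideanSpace ℝ (Fin n)) (y : ℝ), y ≠ 0 →
      (∑ i : Fin n,
          deriv (deriv (fun t : ℝ => H (x + t • EuclideanSpace.single i 1) y)) 0)
        + deriv (deriv (fun t : ℝ => H x t)) y
        + a / y * deriv (fun t : ℝ => H x t) y = 0) ∧
    (∀ (x : EuclideanSpace ℝ (Fin n)) (y : ℝ), H x (-y) = H x y) ∧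
    (∀ x : EuclideanSpace ℝ (Fin n), (∑ i, (x i) ^ 2) = 1 → H x 0 = 1) := by
  refine ⟨?_, ?_, ?_⟩
  · intro x y hy
    set R : ℝ := ∑ i, (x i) ^ 2 with hR
    -- y-derivatives
    have hfy : (fun t : ℝ => H x t)
        = fun t => ∑ k ∈ range (m + 1), (C k * R ^ (m - k)) * t ^ (2 * k) := by
      funext t; rw [hH]; exact Finset.sum_congr rfl fun k _ => by ring
    have d1 : ∀ t : ℝ, HasDerivAt (fun s : ℝ => H x s)
        (∑ k ∈ range (m + 1), (C k * R ^ (m - k)) * ((2 * k : ℕ) * t ^ (2 * k - 1))) t := by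
      intro t; rw [hfy]; exact sumPow_hasDerivAt _ _ _ t
    have hd1 : deriv (fun t : ℝ => H x t)
        = fun t => ∑ k ∈ range (m + 1), (C k * R ^ (m - k) * (2 * k : ℕ)) * t ^ (2 * k - 1) := by
      funext t; rw [(d1 t).deriv]; exact Finset.sum_congr rfl fun k _ => by ring
    have d2 : HasDerivAt (deriv (fun t : ℝ => H x t))
        (∑ k ∈ range (m + 1), (C k * R ^ (m - k) * (2 * k : ℕ))
          * ((2 * k - 1 : ℕ) * y ^ (2 * k - 1 - 1))) y := by
      rw [hd1]; exact sumPow_hasDerivAt _ _ _ y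
    -- x-derivatives
    have hx2 : ∀ i : Fin n,
        deriv (deriv (fun t : ℝ => H (x + t • EuclideanSpace.single i 1) y)) 0
        = ∑ k ∈ range (m + 1), (C k * y ^ (2 * k) * ((m - k : ℕ) : ℝ))
            * ((((m - k - 1 : ℕ) : ℝ) * R ^ (m - k - 1 - 1) * (2 * x i)) * (2 * x i)
              + R ^ (m - k - 1) * 2) := by
      intro i
      have hQ : ∀ t : ℝ, (∑ j, ((x + t • (EuclideanSpace.single i 1 : EuclideanSpace ℝ (Fin n))) j) ^ 2)
          = t ^ 2 + 2 * x i * t + R := by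
        intro t
        have h1 : ∀ j : Fin n, ((x + t • (EuclideanSpace.single i 1 : EuclideanSpace ℝ (Fin n))) j) ^ 2
            = (x j) ^ 2 + (if j = i then 2 * x j * t + t ^ 2 else 0) := by
          intro j
          simp only [PiLp.add_apply, PiLp.smul_apply, EuclideanSpace.single_apply, smul_eq_mul]
          by_cases h : j = i
          · simp [h]; ring
          · simp [h]
        rw [Finset.sum_congr rfl (fun j _ => h1 j), Finset.sum_add_distrib,
          Finset.sum_ite_eq' univ i (fun j => 2 * x j * t + t ^ 2)]
        simp only [mem_univ, if_pos, ← hR]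
        ring
      have hq : ∀ t : ℝ, HasDerivAt (fun s : ℝ => s ^ 2 + 2 * x i * s + R) (2 * t + 2 * x i) t := by
        intro t
        have h := ((hasDerivAt_pow 2 t).add ((hasDerivAt_id t).const_mul (2 * x i))).add_const R
        convert h using 1
        all_goals (push_cast; first | rfl | ring)
      have hfi : (fun t : ℝ => H (x + t • EuclideanSpace.single i 1) y)
          = fun t => ∑ k ∈ range (m + 1),
              (C k * y ^ (2 * k)) * (t ^ 2 + 2 * x i * t + R) ^ (m - k) := by
        funext t; rw [hH, hQ t]
      have di1 : ∀ t : ℝ, HasDerivAt (fun s : ℝ => H (x + s • EuclideanSpace.single i 1) y)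
          (∑ k ∈ range (m + 1), (C k * y ^ (2 * k))
            * (((m - k : ℕ) : ℝ) * (t ^ 2 + 2 * x i * t + R) ^ (m - k - 1) * (2 * t + 2 * x i))) t := by
        intro t; rw [hfi]
        apply HasDerivAt.fun_sum
        intro k _
        exact ((hq t).pow (m - k)).const_mul _
      have hdi1 : deriv (fun t : ℝ => H (x + t • EuclideanSpace.single i 1) y)
          = fun t => ∑ k ∈ range (m + 1), (C k * y ^ (2 * k) * ((m - k : ℕ) : ℝ))
              * ((t ^ 2 + 2 * x i * t + R) ^ (m - k - 1) * (2 * t + 2 * x i)) := by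
        funext t; rw [(di1 t).deriv]; exact Finset.sum_congr rfl fun k _ => by ring
      have hv : HasDerivAt (fun s : ℝ => 2 * s + 2 * x i) 2 0 := by
        simpa using ((hasDerivAt_id (0 : ℝ)).const_mul 2).add_const (2 * x i)
      have di2 : HasDerivAt (deriv (fun t : ℝ => H (x + t • EuclideanSpace.single i 1) y))
          (∑ k ∈ range (m + 1), (C k * y ^ (2 * k) * ((m - k : ℕ) : ℝ))
            * ((((m - k - 1 : ℕ) : ℝ) * R ^ (m - k - 1 - 1) * (2 * x i)) * (2 * x i)
              + R ^ (m - k - 1) * 2)) 0 := by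
        rw [hdi1]
        apply HasDerivAt.fun_sum
        intro k _
        have h := (((hq 0).pow (m - k - 1)).mul hv).const_mul
          (C k * y ^ (2 * k) * ((m - k : ℕ) : ℝ))
        convert h using 2 <;> norm_num
        all_goals rfl
      exact di2.deriv
    rw [Finset.sum_congr rfl (fun i _ => hx2 i), Finset.sum_comm, d2.deriv, (d1 y).deriv]
    have hinner : ∀ k ∈ range (m + 1),
        (∑ i : Fin n, (C k * y ^ (2 * k) * ((m - k : ℕ) : ℝ))
          * ((((m - k - 1 : ℕ) : ℝ) * R ^ (m - k - 1 - 1) * (2 * x i)) * (2 * x i)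
            + R ^ (m - k - 1) * 2))
        = (C k * y ^ (2 * k) * ((m - k : ℕ) : ℝ) * ((m - k - 1 : ℕ) : ℝ)
            * R ^ (m - k - 1 - 1) * 4) * R
          + n * (C k * y ^ (2 * k) * ((m - k : ℕ) : ℝ) * R ^ (m - k - 1) * 2) := by
      intro k _
      have hterm : ∀ i : Fin n, (C k * y ^ (2 * k) * ((m - k : ℕ) : ℝ))
          * ((((m - k - 1 : ℕ) : ℝ) * R ^ (m - k - 1 - 1) * (2 * x i)) * (2 * x i)
            + R ^ (m - k - 1) * 2)
          = (C k * y ^ (2 * k) * ((m - k : ℕ) : ℝ) * ((m - k - 1 : ℕ) : ℝ)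
              * R ^ (m - k - 1 - 1) * 4) * (x i) ^ 2
            + (C k * y ^ (2 * k) * ((m - k : ℕ) : ℝ) * R ^ (m - k - 1) * 2) := by
        intro i; ring
      rw [Finset.sum_congr rfl (fun i _ => hterm i), Finset.sum_add_distrib,
        ← Finset.mul_sum, Finset.sum_const, card_univ, Fintype.card_fin, nsmul_eq_mul, ← hR]
    rw [Finset.sum_congr rfl hinner, Finset.mul_sum, add_assoc, ← Finset.sum_add_distrib,
      Finset.sum_range_succ, Finset.sum_range_succ']
    have hGm : (C m * y ^ (2 * m) * ((m - m : ℕ) : ℝ) * ((m - m - 1 : ℕ) : ℝ)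
        * R ^ (m - m - 1 - 1) * 4) * R
        + n * (C m * y ^ (2 * m) * ((m - m : ℕ) : ℝ) * R ^ (m - m - 1) * 2) = 0 := by
      simp [Nat.sub_self]
    have hE0 : C 0 * R ^ (m - 0) * ((2 * 0 : ℕ) : ℝ) * (((2 * 0 - 1 : ℕ) : ℝ) * y ^ (2 * 0 - 1 - 1))
        + a / y * (C 0 * R ^ (m - 0) * (((2 * 0 : ℕ) : ℝ) * y ^ (2 * 0 - 1))) = 0 := by
      norm_num
    rw [hGm, hE0, add_zero, add_zero, ← Finset.sum_add_distrib]
    apply Finset.sum_eq_zero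
    intro k hk
    rw [mem_range] at hk
    have hk1 : k + 1 ≤ m := hk
    have e1 : 2 * (k + 1) - 1 - 1 = 2 * k := by omega
    have e2 : 2 * (k + 1) - 1 = 2 * k + 1 := by omega
    have e3 : m - (k + 1) = m - k - 1 := by omega
    have e4 : 2 * (k + 1) = 2 * k + 2 := by omega
    rw [e1, e2, e3, e4, Nat.cast_sub hk.le]
    have hCC := hCk (k + 1) (by omega) hk1
    simp only [Nat.add_sub_cancel] at hCC
    have hden1 : (2 : ℝ) * ((k : ℝ) + 1) ≠ 0 := by positivity
    have hden2 : 2 * ((k : ℝ) + 1) - 1 + a ≠ 0 := by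
      have h1 : (0:ℝ) ≤ (k : ℝ) := Nat.cast_nonneg k
      have h2 : -1 < a := ha.1
      have : (0:ℝ) < 2 * ((k : ℝ) + 1) - 1 + a := by linarith
      exact ne_of_gt this
    push_cast at hCC
    have hCC2 : C (k + 1) * (2 * ((k : ℝ) + 1) * (2 * ((k : ℝ) + 1) - 1 + a))
        = -(2 * ((m : ℝ) - (k + 1) + 1) * (2 * ((m : ℝ) - (k + 1)) + n)) * C k := by
      rw [hCC]; field_simp
      try ring
    have hay : ∀ A B : ℝ, a / y * (A * (B * (y ^ (2 * k) * y))) = a * (A * (B * y ^ (2 * k))) := by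
      intro A B; field_simp
    rcases Nat.lt_or_ge (k + 1) m with hk2 | hk2
    · -- k + 2 ≤ m
      have c2 : ((m - k - 1 : ℕ) : ℝ) = (m : ℝ) - k - 1 := by
        rw [show m - k - 1 = m - (k + 1) from by omega, Nat.cast_sub hk1]; push_cast; ring
      rw [c2, show m - k - 1 = (m - k - 1 - 1) + 1 from by omega, pow_succ (y) (2*k), hay]
      push_cast
      linear_combination (R ^ ((m - k - 1 - 1) + 1) * y ^ (2 * k)) * hCC2
    · -- m = k + 1
      have hmk : m = k + 1 := by omega
      rw [show m - k - 1 - 1 = 0 from by omega, show m - k - 1 = 0 from by omega,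
        pow_succ (y) (2*k), hay]
      have hmr : (m : ℝ) = (k : ℝ) + 1 := by rw [hmk]; push_cast; ring
      rw [hmr] at hCC2 ⊢
      push_cast
      linear_combination (y ^ (2 * k)) * hCC2
  · intro x y
    rw [hH, hH]
    refine Finset.sum_congr rfl fun k _ => ?_
    rw [(even_two_mul k).neg_pow]
  · intro x hx
    rw [hH, hx]
    rw [Finset.sum_eq_single 0]
    · simp [hC0]
    · intro b _ hb
      rw [zero_pow (by omega)]
      ring
    · simp
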